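/- For each n ≥ 1, the set {C_α : α ⊨ n} of canonical quasisymmetric functions is a ℤ-basis of QSymⁿ, the ℤ-span of the fundamental quasisymmetric functions {F_α : α ⊨ n}; that is, the C_α are ℤ-linearly independent and their ℤ-span equals the ℤ-span of the F_α. -/

import Mathlib

/-- Cell `(r,c)` (0-indexed: row `r` from the top, column `c` from the left) of the
reverse composition diagram of the composition `α`. -/
def IsCell (α : List ℕ) (r c : ℕ) : Prop := r < α.length ∧ c < α.getD r 0

instance (α : List ℕ) (r c : ℕ) : Decidable (IsCell α r c) :=
  inferInstanceAs (Decidable (r < α.length ∧ c < α.getD r 0))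

/-- A standard reverse composition tableau (SRCT) of shape `α`: a bijective filling of the
reverse composition diagram of `α` by `{1,…,α.sum}` (with the junk value `0` off the diagram)
whose rows decrease from left to right, whose first column increases from top to bottom,
and which satisfies the triple rule. -/
structure SRCT (α : List ℕ) where
  entry : ℕ → ℕ → ℕ
  zero_off : ∀ r c, ¬ IsCell α r c → entry r c = 0
  one_le : ∀ r c, IsCell α r c → 1 ≤ entry r c
  le_sum : ∀ r c, IsCell α r c → entry r c ≤ α.sum
  inj : ∀ r c r' c', IsCell α r c → IsCell α r' c' → entry r c = entry r' c' → r = r' ∧ c = c'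
  surj : ∀ m, 1 ≤ m → m ≤ α.sum → ∃ r c, IsCell α r c ∧ entry r c = m
  row_dec : ∀ r c, IsCell α r (c + 1) → entry r (c + 1) < entry r c
  col1_inc : ∀ r r', r < r' → IsCell α r 0 → IsCell α r' 0 → entry r 0 < entry r' 0
  triple : ∀ r r' c, r < r' → IsCell α r c → IsCell α r' (c + 1) →
    entry r' (c + 1) < entry r c → IsCell α r (c + 1) ∧ entry r' (c + 1) < entry r (c + 1)

/-- `i` is a descent of `T`: `i+1` appears weakly right of `i`. -/
def Descent (α : List ℕ) (T : SRCT α) (i : ℕ) : Prop :=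
  ∃ r c r' c', IsCell α r c ∧ IsCell α r' c' ∧
    T.entry r c = i ∧ T.entry r' c' = i + 1 ∧ c ≤ c'

/-- `i` and `i+1` are attacking in `T`: same column, or adjacent columns with `i+1`
strictly southeast of `i`. -/
def Attacking (α : List ℕ) (T : SRCT α) (i : ℕ) : Prop :=
  ∃ r c r' c', IsCell α r c ∧ IsCell α r' c' ∧
    T.entry r c = i ∧ T.entry r' c' = i + 1 ∧ (c' = c ∨ (c' = c + 1 ∧ r < r'))

/-- The entry function of the filling `s_i(T)` obtained from `T` by interchanging the
positions of the entries `i` and `i+1`. -/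
def swapEntry (α : List ℕ) (T : SRCT α) (i : ℕ) : ℕ → ℕ → ℕ := fun r c =>
  if T.entry r c = i then i + 1 else if T.entry r c = i + 1 then i else T.entry r c

/-- The entries in every column of `T` increase from top to bottom. -/
def ColIncreasing (α : List ℕ) (T : SRCT α) : Prop :=
  ∀ r r' c, r < r' → IsCell α r c → IsCell α r' c → T.entry r c < T.entry r' c

/-- The descent set of `T`. -/
def desSet (α : List ℕ) (T : SRCT α) : Set ℕ := {i | Descent α T i}

/-- The fundamental quasisymmetric function determined by the subset `S ⊆ [n-1]`
(`F_{comp(S)}`), as a formal power series in the commuting variables `x_0, x_1, x_2, …`: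
the sum of `x_{i_1} ⋯ x_{i_n}` over all `i_1 ≤ ⋯ ≤ i_n` with `i_j < i_{j+1}` whenever
`j ∈ S` (positions `1`-indexed). -/
noncomputable def FqsymSet (n : ℕ) (S : Set ℕ) : MvPowerSeries ℕ ℤ := fun d =>
  (Set.ncard {f : Fin n → ℕ |
    (∀ k l : Fin n, k ≤ l → f k ≤ f l) ∧
    (∀ k l : Fin n, (l : ℕ) = (k : ℕ) + 1 → ((k : ℕ) + 1) ∈ S → f k < f l) ∧
    (∀ j : ℕ, d j = Set.ncard {k : Fin n | f k = j})} : ℤ)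

/-- The compositions of `n`. -/
abbrev CompN (n : ℕ) : Type := {l : List ℕ // (∀ a ∈ l, 0 < a) ∧ l.sum = n}

/-- `set(α) ⊆ [n-1]` for a composition `α`: the proper partial sums of the parts. -/
def compSet (α : List ℕ) : Set ℕ := {s | ∃ k, 0 < k ∧ k < α.length ∧ s = (α.take k).sum}

/-- The canonical quasisymmetric function `C_α`: the sum of `F_{comp(τ)}` over all SRCTs `τ`
of shape `α` whose columns increase from top to bottom. -/
noncomputable def Cqsym (n : ℕ) (α : List ℕ) : MvPowerSeries ℕ ℤ :=
  ∑ᶠ T ∈ {T : SRCT α | ColIncreasing α T}, FqsymSet n (desSet α T)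

namespace CB

open Finset

/-! ### Partial sums -/

def psum (α : List ℕ) (k : ℕ) : ℕ := (α.take k).sum

lemma psum_zero (α : List ℕ) : psum α 0 = 0 := rfl

lemma psum_succ (α : List ℕ) (k : ℕ) : psum α (k+1) = psum α k + α.getD k 0 := by
  by_cases h : k < α.length
  · rw [psum, psum, List.sum_take_succ _ _ h, List.getD_eq_getElem _ _ h]
  · push_neg at h
    rw [psum, psum, List.take_of_length_le (by omega), List.take_of_length_le (by omega),
      List.getD_eq_default _ _ h]
    omega

lemma psum_eq_sum_range (α : List ℕ) (k : ℕ) : psum α k = ∑ i ∈ Finset.range k, α.getD i 0 := by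
  induction k with
  | zero => rfl
  | succ k ih => rw [psum_succ, Finset.sum_range_succ, ih]

lemma psum_mono (α : List ℕ) {k m : ℕ} (h : k ≤ m) : psum α k ≤ psum α m := by
  rw [psum_eq_sum_range, psum_eq_sum_range]
  exact Finset.sum_le_sum_of_subset (Finset.range_subset_range.2 h)

lemma psum_length (α : List ℕ) : psum α α.length = α.sum := by
  rw [psum, List.take_length]

lemma psum_le_sum (α : List ℕ) (k : ℕ) : psum α k ≤ α.sum := by
  by_cases h : k ≤ α.length
  · rw [← psum_length]; exact psum_mono α h
  · rw [psum, List.take_of_length_le (by omega)]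

lemma getD_pos {α : List ℕ} (hpos : ∀ a ∈ α, 0 < a) {k : ℕ} (h : k < α.length) :
    0 < α.getD k 0 := by
  rw [List.getD_eq_getElem _ _ h]
  exact hpos _ (List.getElem_mem h)

lemma psum_lt_psum {α : List ℕ} (hpos : ∀ a ∈ α, 0 < a) {k m : ℕ} (h : k < m)
    (hm : m ≤ α.length) : psum α k < psum α m := by
  have h1 : psum α k < psum α (k+1) := by
    have := getD_pos hpos (show k < α.length by omega)
    rw [psum_succ]; omega
  exact lt_of_lt_of_le h1 (psum_mono α h)

lemma psum_lt_sum {α : List ℕ} (hpos : ∀ a ∈ α, 0 < a) {k : ℕ} (h : k < α.length) :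
    psum α k < α.sum := by
  rw [← psum_length]; exact psum_lt_psum hpos h le_rfl

lemma getD_eq_psum {α : List ℕ} {r : ℕ} :
    α.getD r 0 = psum α (r+1) - psum α r := by
  rw [psum_succ]; omega

/-! ### The block of a value -/

noncomputable def crow (α : List ℕ) (u : ℕ) : ℕ :=
  Nat.find (⟨α.length, Or.inr le_rfl⟩ : ∃ r, u ≤ psum α (r+1) ∨ α.length ≤ r)

lemma crow_spec {α : List ℕ} {u : ℕ} (hu1 : 1 ≤ u) (hu2 : u ≤ α.sum) :
    crow α u < α.length ∧ psum α (crow α u) < u ∧ u ≤ psum α (crow α u + 1) := by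
  have hlen : 1 ≤ α.length := by
    rcases α with _ | ⟨a, l⟩
    · simp at hu2; omega
    · simp
  have hP : u ≤ psum α ((α.length - 1) + 1) ∨ α.length ≤ α.length - 1 := by
    left; rw [show α.length - 1 + 1 = α.length by omega, psum_length]; exact hu2
  have hfind : crow α u ≤ α.length - 1 := Nat.find_le hP
  have hdisj : u ≤ psum α (crow α u + 1) ∨ α.length ≤ crow α u :=
    Nat.find_spec (⟨α.length, Or.inr le_rfl⟩ : ∃ r, u ≤ psum α (r+1) ∨ α.length ≤ r)
  have hlt : crow α u < α.length := by omega
  refine ⟨hlt, ?_, ?_⟩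
  · rcases Nat.eq_zero_or_pos (crow α u) with h0 | h0
    · rw [h0, psum_zero]; omega
    · have := Nat.find_min (⟨α.length, Or.inr le_rfl⟩ :
        ∃ r, u ≤ psum α (r+1) ∨ α.length ≤ r) (show crow α u - 1 < crow α u by omega)
      push_neg at this
      have := this.1
      rw [show crow α u - 1 + 1 = crow α u by omega] at this
      omega
  · rcases hdisj with h | h
    · exact h
    · omega

lemma crow_eq {α : List ℕ} {u r : ℕ} (hr : r < α.length) (h1 : psum α r < u)
    (h2 : u ≤ psum α (r+1)) : crow α u = r := by
  have hu1 : 1 ≤ u := by omega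
  have hu2 : u ≤ α.sum := le_trans h2 (psum_le_sum α _)
  obtain ⟨hc1, hc2, hc3⟩ := crow_spec hu1 hu2
  by_contra hne
  rcases Nat.lt_or_ge (crow α u) r with h | h
  · have := psum_mono α (show crow α u + 1 ≤ r by omega)
    omega
  · have hgt : r < crow α u := by omega
    have := psum_mono α (show r + 1 ≤ crow α u by omega)
    omega

lemma crow_mono {α : List ℕ} {u u' : ℕ} (hu1 : 1 ≤ u) (hu2' : u' ≤ α.sum) (h : u ≤ u') :
    crow α u ≤ crow α u' := by
  obtain ⟨_, hb2, hb3⟩ := crow_spec hu1 (le_trans h hu2')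
  obtain ⟨_, hc2, hc3⟩ := crow_spec (by omega) hu2'
  by_contra hlt
  have := psum_mono α (show crow α u' + 1 ≤ crow α u by omega)
  omega

noncomputable def ccol (α : List ℕ) (u : ℕ) : ℕ := psum α (crow α u + 1) - u

/-! ### The canonical tableau -/

def centry (α : List ℕ) (r c : ℕ) : ℕ := if IsCell α r c then psum α (r+1) - c else 0

lemma centry_of_cell {α : List ℕ} {r c : ℕ} (h : IsCell α r c) :
    centry α r c = psum α (r+1) - c := if_pos h

lemma cell_lt {α : List ℕ} {r c : ℕ} (h : IsCell α r c) :
    psum α r + c < psum α (r+1) := by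
  have := h.2
  rw [getD_eq_psum] at this
  omega

lemma centry_pos {α : List ℕ} {r c : ℕ} (h : IsCell α r c) : 1 ≤ centry α r c := by
  rw [centry_of_cell h]; have := cell_lt h; omega

lemma centry_gt {α : List ℕ} {r c : ℕ} (h : IsCell α r c) : psum α r < centry α r c := by
  rw [centry_of_cell h]; have := cell_lt h; omega

lemma centry_le {α : List ℕ} {r c : ℕ} (h : IsCell α r c) :
    centry α r c ≤ psum α (r+1) := by
  rw [centry_of_cell h]; omega

lemma centry_le_sum {α : List ℕ} {r c : ℕ} (h : IsCell α r c) : centry α r c ≤ α.sum :=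
  le_trans (centry_le h) (psum_le_sum α _)

lemma crow_centry {α : List ℕ} {r c : ℕ} (h : IsCell α r c) :
    crow α (centry α r c) = r ∧ ccol α (centry α r c) = c := by
  have h1 := centry_gt h
  have h2 := centry_le h
  have hr := crow_eq h.1 h1 h2
  refine ⟨hr, ?_⟩
  rw [ccol, hr, centry_of_cell h]
  have := cell_lt h
  omega

lemma isCell_crow {α : List ℕ} {u : ℕ} (hu1 : 1 ≤ u) (hu2 : u ≤ α.sum) :
    IsCell α (crow α u) (ccol α u) := by
  obtain ⟨h1, h2, h3⟩ := crow_spec hu1 hu2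
  refine ⟨h1, ?_⟩
  rw [getD_eq_psum, ccol]
  omega

lemma centry_crow {α : List ℕ} {u : ℕ} (hu1 : 1 ≤ u) (hu2 : u ≤ α.sum) :
    centry α (crow α u) (ccol α u) = u := by
  obtain ⟨h1, h2, h3⟩ := crow_spec hu1 hu2
  rw [centry_of_cell (isCell_crow hu1 hu2), ccol]
  omega

lemma centry_inj {α : List ℕ} {r c r' c' : ℕ} (h : IsCell α r c) (h' : IsCell α r' c')
    (he : centry α r c = centry α r' c') : r = r' ∧ c = c' := by
  have a := crow_centry h
  have b := crow_centry h'
  rw [he] at a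
  exact ⟨a.1.symm.trans b.1, a.2.symm.trans b.2⟩

def canonT (α : List ℕ) (hpos : ∀ a ∈ α, 0 < a) : SRCT α where
  entry := centry α
  zero_off := fun r c h => if_neg h
  one_le := fun r c h => centry_pos h
  le_sum := fun r c h => centry_le_sum h
  inj := fun r c r' c' h h' he => centry_inj h h' he
  surj := by
    intro m h1 h2
    exact ⟨crow α m, ccol α m, isCell_crow h1 h2, centry_crow h1 h2⟩
  row_dec := by
    intro r c h
    have hc : IsCell α r c := ⟨h.1, by have := h.2; omega⟩
    rw [centry_of_cell h, centry_of_cell hc]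
    have := cell_lt h
    omega
  col1_inc := by
    intro r r' h h0 h0'
    rw [centry_of_cell h0, centry_of_cell h0']
    have h1 := cell_lt h0
    have h2 := cell_lt h0'
    have := psum_mono α (show r + 1 ≤ r' by omega)
    omega
  triple := by
    intro r r' c h hc hc' hlt
    exfalso
    rw [centry_of_cell hc, centry_of_cell hc'] at hlt
    have h1 := cell_lt hc
    have h2 := cell_lt hc'
    have := psum_mono α (show r + 1 ≤ r' by omega)
    omega

lemma canonT_colInc (α : List ℕ) (hpos : ∀ a ∈ α, 0 < a) : ColIncreasing α (canonT α hpos) := by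
  intro r r' c h hc hc'
  show centry α r c < centry α r' c
  rw [centry_of_cell hc, centry_of_cell hc']
  have h1 := cell_lt hc
  have h2 := cell_lt hc'
  have := psum_mono α (show r + 1 ≤ r' by omega)
  omega

end CB
namespace CB
open Finset

variable {α : List ℕ}

lemma SRCT.ext' {T T' : SRCT α} (h : T.entry = T'.entry) : T = T' := by
  cases T; cases T'; cases h; rfl

lemma getD_le_sum (α : List ℕ) (r : ℕ) : α.getD r 0 ≤ α.sum := by
  rw [getD_eq_psum]
  have := psum_le_sum α (r+1)
  omega

instance : Finite (SRCT α) := by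
  apply Finite.of_injective
    (f := fun (T : SRCT α) (rc : Fin α.length × Fin (α.sum + 1)) =>
      (⟨T.entry rc.1 rc.2, by
        by_cases h : IsCell α rc.1 rc.2
        · have := T.le_sum _ _ h; omega
        · rw [T.zero_off _ _ h]; omega⟩ : Fin (α.sum + 1)))
  intro T T' h
  apply SRCT.ext'
  funext r c
  by_cases hc : IsCell α r c
  · have hr : r < α.length := hc.1
    have hcn : c < α.sum + 1 := by
      have h2 := hc.2
      have := getD_le_sum α r
      omega
    have h2 := congrFun h (⟨r, hr⟩, ⟨c, hcn⟩)
    simpa using congrArg Fin.val h2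
  · rw [T.zero_off _ _ hc, T'.zero_off _ _ hc]

lemma exists_pos (T : SRCT α) {u : ℕ} (h1 : 1 ≤ u) (h2 : u ≤ α.sum) :
    ∃ p : ℕ × ℕ, IsCell α p.1 p.2 ∧ T.entry p.1 p.2 = u := by
  obtain ⟨r, c, hc, he⟩ := T.surj u h1 h2
  exact ⟨(r, c), hc, he⟩

noncomputable def rowOf (T : SRCT α) (u : ℕ) : ℕ :=
  if h : 1 ≤ u ∧ u ≤ α.sum then (exists_pos T h.1 h.2).choose.1 else 0

noncomputable def colOf (T : SRCT α) (u : ℕ) : ℕ :=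
  if h : 1 ≤ u ∧ u ≤ α.sum then (exists_pos T h.1 h.2).choose.2 else 0

lemma pos_spec (T : SRCT α) {u : ℕ} (h1 : 1 ≤ u) (h2 : u ≤ α.sum) :
    IsCell α (rowOf T u) (colOf T u) ∧ T.entry (rowOf T u) (colOf T u) = u := by
  rw [rowOf, colOf, dif_pos ⟨h1, h2⟩, dif_pos ⟨h1, h2⟩]
  exact (exists_pos T h1 h2).choose_spec

lemma pos_uniq (T : SRCT α) {u r c : ℕ} (hc : IsCell α r c) (he : T.entry r c = u) :
    r = rowOf T u ∧ c = colOf T u := by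
  have h1 : 1 ≤ u := he ▸ T.one_le r c hc
  have h2 : u ≤ α.sum := he ▸ T.le_sum r c hc
  obtain ⟨hc', he'⟩ := pos_spec T h1 h2
  exact T.inj r c _ _ hc hc' (he.trans he'.symm)

lemma descent_bounds {T : SRCT α} {i : ℕ} (h : Descent α T i) : 1 ≤ i ∧ i + 1 ≤ α.sum := by
  obtain ⟨r, c, r', c', hc, hc', he, he', _⟩ := h
  exact ⟨he ▸ T.one_le r c hc, he' ▸ T.le_sum r' c' hc'⟩

lemma descent_iff (T : SRCT α) {i : ℕ} (h1 : 1 ≤ i) (h2 : i + 1 ≤ α.sum) :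
    Descent α T i ↔ colOf T i ≤ colOf T (i+1) := by
  constructor
  · rintro ⟨r, c, r', c', hc, hc', he, he', hle⟩
    obtain ⟨hr, hcol⟩ := pos_uniq T hc he
    obtain ⟨hr', hcol'⟩ := pos_uniq T hc' he'
    omega
  · intro hle
    obtain ⟨hca, hea⟩ := pos_spec T h1 (by omega)
    obtain ⟨hcb, heb⟩ := pos_spec T (by omega : 1 ≤ i + 1) h2
    exact ⟨_, _, _, _, hca, hcb, hea, heb, hle⟩

lemma run (T : SRCT α) {v w : ℕ} (h1 : 1 ≤ v) (hvw : v ≤ w) (hw : w ≤ α.sum)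
    (h : ∀ i, v ≤ i → i < w → ¬ Descent α T i) : colOf T w + (w - v) ≤ colOf T v := by
  induction w, hvw using Nat.le_induction with
  | base => omega
  | succ w hvw ih =>
    have hw' : w ≤ α.sum := by omega
    have ihh := ih hw' (fun i hi hi' => h i hi (by omega))
    have hnd := h w hvw (by omega)
    rw [descent_iff T (by omega) (by omega)] at hnd
    push_neg at hnd
    omega

lemma exists_descent_between (T : SRCT α) {v w : ℕ} (h1 : 1 ≤ v) (hvw : v < w)
    (hw : w ≤ α.sum) (hv0 : colOf T v = 0) (hw0 : colOf T w = 0) :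
    ∃ i, v ≤ i ∧ i < w ∧ Descent α T i := by
  by_contra hcon
  push_neg at hcon
  have := run T h1 (by omega : v ≤ w) hw (fun i hi hi' => hcon i hi hi')
  omega

lemma entry_le_col0 (T : SRCT α) {r c : ℕ} (h : IsCell α r c) :
    T.entry r c ≤ T.entry r 0 := by
  induction c with
  | zero => exact le_refl _
  | succ c ih =>
    have hc : IsCell α r c := ⟨h.1, by have := h.2; omega⟩
    have := T.row_dec r c h
    have := ih hc
    omega

end CB
namespace CB
open Finset

variable {α : List ℕ}

def CellsF (α : List ℕ) (j : ℕ) : Finset (ℕ × ℕ) :=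
  (Finset.range α.length ×ˢ Finset.range α.sum).filter
    (fun p => IsCell α p.1 p.2 ∧ j ≤ p.1)

lemma mem_CellsF {j : ℕ} {p : ℕ × ℕ} :
    p ∈ CellsF α j ↔ IsCell α p.1 p.2 ∧ j ≤ p.1 := by
  constructor
  · intro h
    exact (Finset.mem_filter.1 h).2
  · intro h
    refine Finset.mem_filter.2 ⟨Finset.mem_product.2 ⟨?_, ?_⟩, h⟩
    · exact Finset.mem_range.2 h.1.1
    · refine Finset.mem_range.2 ?_
      have h2 := h.1.2
      have := getD_le_sum α p.1
      omega

lemma card_CellsF {j : ℕ} (hj : j ≤ α.length) :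
    (CellsF α j).card = α.sum - psum α j := by
  have hbU : CellsF α j = (Finset.Ico j α.length).biUnion
      (fun r => {r} ×ˢ Finset.range (α.getD r 0)) := by
    ext ⟨r, c⟩
    simp only [mem_CellsF, Finset.mem_biUnion, Finset.mem_Ico, Finset.mem_product,
      Finset.mem_singleton, Finset.mem_range]
    constructor
    · rintro ⟨⟨h1, h2⟩, h3⟩
      exact ⟨r, ⟨h3, h1⟩, rfl, h2⟩
    · rintro ⟨r', ⟨h1, h2⟩, rfl, h3⟩
      exact ⟨⟨h2, h3⟩, h1⟩
  rw [hbU, Finset.card_biUnion]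
  · have : ∀ r ∈ Finset.Ico j α.length, ({r} ×ˢ Finset.range (α.getD r 0)).card = α.getD r 0 := by
      intro r _
      rw [Finset.card_product, Finset.card_singleton, Finset.card_range, one_mul]
    rw [Finset.sum_congr rfl this]
    have hsplit : ∑ r ∈ Finset.range j, α.getD r 0 + ∑ r ∈ Finset.Ico j α.length, α.getD r 0
        = ∑ r ∈ Finset.range α.length, α.getD r 0 := by
      simp only [Finset.range_eq_Ico]
      exact Finset.sum_Ico_consecutive _ (Nat.zero_le j) hj
    have h1 : ∑ r ∈ Finset.range j, α.getD r 0 = psum α j := (psum_eq_sum_range α j).symm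
    have h2 : ∑ r ∈ Finset.range α.length, α.getD r 0 = psum α α.length :=
      (psum_eq_sum_range α α.length).symm
    rw [psum_length] at h2
    omega
  · intro x _ y _ hxy
    apply Finset.disjoint_left.2
    rintro ⟨r, c⟩ h1 h2
    simp only [Finset.mem_product, Finset.mem_singleton] at h1 h2
    exact hxy (h1.1.symm.trans h2.1)

lemma card_values_le {T : SRCT α} {j : ℕ} (hj : j ≤ α.length) (V : Finset ℕ)
    (hV : ∀ u ∈ V, 1 ≤ u ∧ u ≤ α.sum ∧ j ≤ rowOf T u) :
    V.card ≤ α.sum - psum α j := by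
  rw [← card_CellsF hj]
  apply Finset.card_le_card_of_injOn (fun u => (rowOf T u, colOf T u))
  · intro u hu
    obtain ⟨h1, h2, h3⟩ := hV u hu
    exact mem_CellsF.2 ⟨(pos_spec T h1 h2).1, h3⟩
  · intro u hu u' hu' he
    obtain ⟨h1, h2, _⟩ := hV u hu
    obtain ⟨h1', h2', _⟩ := hV u' hu'
    have e1 := (pos_spec T h1 h2).2
    have e2 := (pos_spec T h1' h2').2
    rw [← e1, ← e2]
    rw [Prod.mk.injEq] at he
    rw [he.1, he.2]

lemma col0_mono {T : SRCT α} (hpos : ∀ a ∈ α, 0 < a) {r s : ℕ} (h : r ≤ s)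
    (hs : s < α.length) : T.entry r 0 ≤ T.entry s 0 := by
  rcases Nat.eq_or_lt_of_le h with rfl | hlt
  · exact le_refl _
  · exact le_of_lt (T.col1_inc r s hlt ⟨by omega, getD_pos hpos (by omega)⟩
      ⟨hs, getD_pos hpos hs⟩)

lemma col0_entry_gt {T : SRCT α} (hpos : ∀ a ∈ α, 0 < a) {k j : ℕ}
    (hj : j < α.length) (hkp : k ≤ psum α j) (hkn : k < α.sum) :
    k < T.entry j 0 := by
  by_contra hle
  push_neg at hle
  have hrows : ∀ u, k < u → u ≤ α.sum → j + 1 ≤ rowOf T u := by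
    intro u hu1 hu2
    by_contra hr
    push_neg at hr
    obtain ⟨hcell, hent⟩ := pos_spec T (by omega) hu2
    have h1 : T.entry (rowOf T u) (colOf T u) ≤ T.entry (rowOf T u) 0 :=
      entry_le_col0 T hcell
    have h2 : T.entry (rowOf T u) 0 ≤ T.entry j 0 := col0_mono hpos (by omega) hj
    omega
  have hcard := card_values_le (T := T) (j := j+1) (by omega) (Finset.Icc (k+1) α.sum)
    (fun u hu => by
      rw [Finset.mem_Icc] at hu
      exact ⟨by omega, hu.2, hrows u (by omega) hu.2⟩)
  rw [Nat.card_Icc] at hcard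
  have hpj : psum α j < psum α (j+1) := psum_lt_psum hpos (by omega) (by omega)
  have := psum_le_sum α (j+1)
  omega

lemma descent_of_boundary {T : SRCT α} (hpos : ∀ a ∈ α, 0 < a) {k j : ℕ}
    (hk1 : 1 ≤ k) (hj1 : 1 ≤ j) (hj2 : j < α.length) (hkp : k ≤ psum α j) :
    ∃ i, Descent α T i ∧ max k (T.entry (j-1) 0) ≤ i ∧ i < T.entry j 0 := by
  have hkn : k < α.sum := by
    have h1 : psum α j < psum α (j+1) := psum_lt_psum hpos (by omega) (by omega)
    have := psum_le_sum α (j+1)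
    omega
  have hcell' : IsCell α (j-1) 0 := ⟨by omega, getD_pos hpos (by omega)⟩
  have hcell : IsCell α j 0 := ⟨hj2, getD_pos hpos hj2⟩
  have he : k < T.entry j 0 := col0_entry_gt hpos hj2 hkp hkn
  have hee : T.entry (j-1) 0 < T.entry j 0 := T.col1_inc (j-1) j (by omega) hcell' hcell
  have hesum : T.entry j 0 ≤ α.sum := T.le_sum j 0 hcell
  have hcol0 : colOf T (T.entry j 0) = 0 := ((pos_uniq T hcell rfl).2).symm
  rcases Nat.lt_or_ge k (T.entry (j-1) 0) with hke | hke
  · -- descent between the two column-0 entries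
    have he1' : 1 ≤ T.entry (j-1) 0 := T.one_le _ _ hcell'
    have hcol0' : colOf T (T.entry (j-1) 0) = 0 := ((pos_uniq T hcell' rfl).2).symm
    obtain ⟨i, hi1, hi2, hi3⟩ := exists_descent_between T he1' hee hesum hcol0' hcol0
    exact ⟨i, hi3, by omega, hi2⟩
  · -- T.entry (j-1) 0 ≤ k : first show every cell in rows ≥ j has entry > k
    have hrows : ∀ u, k < u → u ≤ α.sum → j ≤ rowOf T u := by
      intro u hu1 hu2
      by_contra hr
      push_neg at hr
      obtain ⟨hcellu, hentu⟩ := pos_spec T (by omega) hu2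
      have h1 : T.entry (rowOf T u) (colOf T u) ≤ T.entry (rowOf T u) 0 :=
        entry_le_col0 T hcellu
      have h2 : T.entry (rowOf T u) 0 ≤ T.entry (j-1) 0 := col0_mono hpos (by omega) (by omega)
      omega
    have hbig : ∀ u, 1 ≤ u → u ≤ α.sum → j ≤ rowOf T u → k < u := by
      intro u hu1 hu2 hru
      by_contra hle
      push_neg at hle
      have hcard := card_values_le (T := T) (j := j) (by omega)
        (insert u (Finset.Icc (k+1) α.sum))
        (fun v hv => by
          rcases Finset.mem_insert.1 hv with rfl | hv'
          · exact ⟨hu1, hu2, hru⟩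
          · rw [Finset.mem_Icc] at hv'
            exact ⟨by omega, hv'.2, hrows v (by omega) hv'.2⟩)
      rw [Finset.card_insert_of_notMem (by rw [Finset.mem_Icc]; omega), Nat.card_Icc] at hcard
      omega
    -- the value k sits in a row < j at column 0
    obtain ⟨hcellk, hentk⟩ := pos_spec T hk1 (by omega)
    have hrk : rowOf T k < j := by
      by_contra hge
      push_neg at hge
      have := hbig k hk1 (by omega) hge
      omega
    have hck : colOf T k = 0 := by
      by_contra hc0
      have hcl : IsCell α (rowOf T k) (colOf T k - 1) := ⟨hcellk.1, by have := hcellk.2; omega⟩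
      have hrd : T.entry (rowOf T k) (colOf T k) < T.entry (rowOf T k) (colOf T k - 1) := by
        have := T.row_dec (rowOf T k) (colOf T k - 1)
          (by rw [show colOf T k - 1 + 1 = colOf T k by omega]; exact hcellk)
        rw [show colOf T k - 1 + 1 = colOf T k by omega] at this
        exact this
      have h1 : T.entry (rowOf T k) (colOf T k - 1) ≤ T.entry (rowOf T k) 0 :=
        entry_le_col0 T hcl
      have h2 : T.entry (rowOf T k) 0 ≤ T.entry (j-1) 0 := col0_mono hpos (by omega) (by omega)
      omega
    obtain ⟨i, hi1, hi2, hi3⟩ := exists_descent_between T hk1 he hesum hck hcol0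
    exact ⟨i, hi3, by omega, hi2⟩

end CB
namespace CB
open Finset

variable {α : List ℕ}

open Classical in
noncomputable def Dfin (T : SRCT α) : Finset ℕ :=
  (Finset.Icc 1 (α.sum - 1)).filter (fun i => Descent α T i)

open Classical in
noncomputable def Pfin (α : List ℕ) : Finset ℕ :=
  (Finset.Icc 1 (α.sum - 1)).filter (fun s => s ∈ compSet α)

open Classical in
lemma mem_Dfin {T : SRCT α} {i : ℕ} : i ∈ Dfin T ↔ Descent α T i := by
  rw [Dfin, Finset.mem_filter]
  constructor
  · exact fun h => h.2
  · intro h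
    have := descent_bounds h
    exact ⟨Finset.mem_Icc.2 ⟨this.1, by omega⟩, h⟩

lemma compSet_bounds {s : ℕ} (hpos : ∀ a ∈ α, 0 < a) (h : s ∈ compSet α) :
    1 ≤ s ∧ s + 1 ≤ α.sum := by
  obtain ⟨k, hk1, hk2, rfl⟩ := h
  have h1 : psum α 0 < psum α k := psum_lt_psum hpos hk1 (by omega)
  have h2 : psum α k < α.sum := psum_lt_sum hpos hk2
  rw [psum_zero] at h1
  have e : (α.take k).sum = psum α k := rfl
  exact ⟨h1, by have := h2; omega⟩

open Classical in
lemma mem_Pfin (hpos : ∀ a ∈ α, 0 < a) {s : ℕ} : s ∈ Pfin α ↔ s ∈ compSet α := by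
  rw [Pfin, Finset.mem_filter]
  constructor
  · exact fun h => h.2
  · intro h
    have := compSet_bounds hpos h
    exact ⟨Finset.mem_Icc.2 ⟨this.1, by omega⟩, h⟩

lemma desSet_eq_coe (T : SRCT α) : desSet α T = ↑(Dfin T) := by
  ext i
  simp only [desSet, Set.mem_setOf_eq, Finset.mem_coe, mem_Dfin]

lemma compSet_eq_coe (hpos : ∀ a ∈ α, 0 < a) : compSet α = ↑(Pfin α) := by
  ext s
  simp only [Finset.mem_coe, mem_Pfin hpos]

open Classical in
lemma card_bound (hpos : ∀ a ∈ α, 0 < a) (T : SRCT α) {k : ℕ} (hk : 1 ≤ k) :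
    ((Finset.Icc k (α.sum - 1)).filter (fun s => s ∈ compSet α)).card ≤
      ((Finset.Icc k (α.sum - 1)).filter (fun i => Descent α T i)).card := by
  set J : Finset ℕ := (Finset.Ico 1 α.length).filter (fun j => k ≤ psum α j) with hJ
  have him : (Finset.Icc k (α.sum - 1)).filter (fun s => s ∈ compSet α) =
      J.image (psum α) := by
    ext s
    simp only [Finset.mem_filter, Finset.mem_Icc, Finset.mem_image, hJ, Finset.mem_Ico]
    constructor
    · rintro ⟨⟨hs1, hs2⟩, j, hj1, hj2, rfl⟩
      exact ⟨j, ⟨⟨hj1, hj2⟩, hs1⟩, rfl⟩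
    · rintro ⟨j, ⟨⟨hj1, hj2⟩, hj3⟩, rfl⟩
      have := psum_lt_sum hpos hj2
      exact ⟨⟨hj3, by omega⟩, j, hj1, hj2, rfl⟩
  rw [him, Finset.card_image_of_injOn (fun j hj j' hj' he => by
    simp only [hJ, Finset.mem_coe, Finset.mem_filter, Finset.mem_Ico] at hj hj'
    by_contra hne
    rcases Nat.lt_or_ge j j' with h | h
    · have := psum_lt_psum hpos h (by omega)
      omega
    · have := psum_lt_psum hpos (show j' < j by omega) (by omega)
      omega)]
  -- now map each boundary index to a descent
  have hf : ∀ j ∈ J, ∃ i, Descent α T i ∧ max k (T.entry (j-1) 0) ≤ i ∧ i < T.entry j 0 := by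
    intro j hj
    simp only [hJ, Finset.mem_filter, Finset.mem_Ico] at hj
    exact descent_of_boundary hpos hk hj.1.1 hj.1.2 hj.2
  choose! f hf1 hf2 hf3 using hf
  apply Finset.card_le_card_of_injOn f
  · intro j hj
    have h1 := hf1 j hj
    have h2 := hf2 j hj
    have h3 := hf3 j hj
    simp only [hJ, Finset.mem_coe, Finset.mem_filter, Finset.mem_Ico] at hj
    have hcell : IsCell α j 0 := ⟨hj.1.2, getD_pos hpos hj.1.2⟩
    have := T.le_sum j 0 hcell
    refine Finset.mem_filter.2 ⟨Finset.mem_Icc.2 ⟨by omega, by omega⟩, h1⟩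
  · intro j hj j' hj' he
    by_contra hne
    have key : ∀ a b, a ∈ J → b ∈ J → a < b → f a < f b := by
      intro a b ha hb hab
      have h3a := hf3 a ha
      have h2b := hf2 b hb
      simp only [hJ, Finset.mem_filter, Finset.mem_Ico] at ha hb
      have hmono : T.entry a 0 ≤ T.entry (b-1) 0 := col0_mono hpos (by omega) (by omega)
      omega
    rcases Nat.lt_or_ge j j' with h | h
    · have := key j j' hj hj' h; omega
    · have := key j' j hj' hj (by omega); omega

lemma sum_eq_sum_card {N : ℕ} (S : Finset ℕ) (hS : S ⊆ Finset.Icc 1 N) :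
    ∑ i ∈ S, i = ∑ k ∈ Finset.Icc 1 N, (S.filter (fun i => k ≤ i)).card := by
  have h1 : ∀ k, (S.filter (fun i => k ≤ i)).card = ∑ i ∈ S, if k ≤ i then 1 else 0 := by
    intro k
    rw [Finset.card_filter]
  simp only [h1]
  rw [Finset.sum_comm]
  apply Finset.sum_congr rfl
  intro i hi
  have hib := Finset.mem_Icc.1 (hS hi)
  have : ∀ k ∈ Finset.Icc 1 N, (if k ≤ i then (1:ℕ) else 0) = if k ∈ Finset.Icc 1 i then 1 else 0 := by
    intro k hk
    have := Finset.mem_Icc.1 hk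
    by_cases h : k ≤ i
    · rw [if_pos h, if_pos (Finset.mem_Icc.2 ⟨this.1, h⟩)]
    · rw [if_neg h, if_neg (fun hc => h (Finset.mem_Icc.1 hc).2)]
  rw [Finset.sum_congr rfl this, Finset.sum_ite_mem,
    Finset.inter_eq_right.2 (Finset.Icc_subset_Icc_right hib.2), Finset.sum_const,
    smul_eq_mul, mul_one, Nat.card_Icc]
  omega

open Classical in
lemma filter_Icc_eq {N : ℕ} (S : Finset ℕ) (hS : S ⊆ Finset.Icc 1 N) {k : ℕ} (hk : 1 ≤ k) :
    S.filter (fun i => k ≤ i) = (Finset.Icc k N).filter (fun i => i ∈ S) := by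
  ext i
  simp only [Finset.mem_filter, Finset.mem_Icc]
  constructor
  · intro ⟨h1, h2⟩
    have := Finset.mem_Icc.1 (hS h1)
    exact ⟨⟨h2, this.2⟩, h1⟩
  · intro ⟨⟨h1, h2⟩, h3⟩
    exact ⟨h3, h1⟩

end CB
namespace CB
open Finset

variable {α : List ℕ}

lemma Dfin_subset {T : SRCT α} : Dfin T ⊆ Finset.Icc 1 (α.sum - 1) := by
  classical
  intro i hi
  have := descent_bounds (mem_Dfin.1 hi)
  exact Finset.mem_Icc.2 ⟨this.1, by omega⟩
lemma Pfin_subset : Pfin α ⊆ Finset.Icc 1 (α.sum - 1) := by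
  classical
  intro i hi
  rw [Pfin, Finset.mem_filter] at hi
  exact hi.1

open Classical in
lemma per_k (hpos : ∀ a ∈ α, 0 < a) (T : SRCT α) {k : ℕ} (hk : 1 ≤ k) :
    ((Finset.Icc k (α.sum - 1)).filter (fun i => i ∈ Pfin α)).card ≤
      ((Finset.Icc k (α.sum - 1)).filter (fun i => i ∈ Dfin T)).card := by
  classical
  have e1 : (Finset.Icc k (α.sum - 1)).filter (fun i => i ∈ Pfin α) =
      (Finset.Icc k (α.sum - 1)).filter (fun s => s ∈ compSet α) := by
    ext i; simp [mem_Pfin hpos]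
  have e2 : (Finset.Icc k (α.sum - 1)).filter (fun i => i ∈ Dfin T) =
      (Finset.Icc k (α.sum - 1)).filter (fun i => Descent α T i) := by
    ext i; simp [mem_Dfin]
  rw [e1, e2]
  exact card_bound hpos T hk

open Classical in
lemma sum_Pfin_le_sum_Dfin (hpos : ∀ a ∈ α, 0 < a) (T : SRCT α) :
    ∑ i ∈ Pfin α, i ≤ ∑ i ∈ Dfin T, i := by
  rw [sum_eq_sum_card (Pfin α) Pfin_subset, sum_eq_sum_card (Dfin T) Dfin_subset]
  apply Finset.sum_le_sum
  intro k hk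
  have hk1 : 1 ≤ k := (Finset.mem_Icc.1 hk).1
  rw [filter_Icc_eq (Pfin α) Pfin_subset hk1, filter_Icc_eq (Dfin T) Dfin_subset hk1]
  exact per_k hpos T hk1

open Classical in
lemma finset_eq_of_card_Icc {N : ℕ} (S S' : Finset ℕ) (hS : S ⊆ Finset.Icc 1 N)
    (hS' : S' ⊆ Finset.Icc 1 N)
    (h : ∀ k ∈ Finset.Icc 1 N, ((Finset.Icc k N).filter (fun i => i ∈ S)).card =
      ((Finset.Icc k N).filter (fun i => i ∈ S')).card) : S = S' := by
  have hF : ∀ k, 1 ≤ k → ((Finset.Icc k N).filter (fun i => i ∈ S)).card =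
      ((Finset.Icc k N).filter (fun i => i ∈ S')).card := by
    intro k hk1
    by_cases hkN : k ≤ N
    · exact h k (Finset.mem_Icc.2 ⟨hk1, hkN⟩)
    · rw [Finset.Icc_eq_empty (by omega), Finset.filter_empty, Finset.filter_empty]
  have step : ∀ (U : Finset ℕ), U ⊆ Finset.Icc 1 N → ∀ i, 1 ≤ i →
      ((Finset.Icc i N).filter (fun x => x ∈ U)).card =
        ((Finset.Icc (i+1) N).filter (fun x => x ∈ U)).card + (if i ∈ U then 1 else 0) := by
    intro U hU i hi
    by_cases hiN : i ≤ N
    · have hins : Finset.Icc i N = insert i (Finset.Icc (i+1) N) := by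
        ext x
        simp only [Finset.mem_Icc, Finset.mem_insert]
        omega
      rw [hins, Finset.filter_insert]
      by_cases hmem : i ∈ U
      · rw [if_pos hmem, if_pos hmem, Finset.card_insert_of_notMem]
        intro hcon
        have := (Finset.mem_Icc.1 (Finset.mem_filter.1 hcon).1).1
        omega
      · rw [if_neg hmem, if_neg hmem]
        omega
    · have hni : i ∉ U := fun hcon => by
        have := (Finset.mem_Icc.1 (hU hcon)).2
        omega
      rw [Finset.Icc_eq_empty (by omega), Finset.Icc_eq_empty (by omega), if_neg hni]
      omega
  ext i
  by_cases hiI : i ∈ Finset.Icc 1 N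
  · have hi1 : 1 ≤ i := (Finset.mem_Icc.1 hiI).1
    have e1 := step S hS i hi1
    have e2 := step S' hS' i hi1
    have e3 := hF i hi1
    have e4 := hF (i+1) (by omega)
    by_cases h1 : i ∈ S <;> by_cases h2 : i ∈ S'
    · exact iff_of_true h1 h2
    · exfalso; rw [if_pos h1] at e1; rw [if_neg h2] at e2; omega
    · exfalso; rw [if_neg h1] at e1; rw [if_pos h2] at e2; omega
    · exact iff_of_false h1 h2
  · constructor
    · intro h'; exact absurd (hS h') hiI
    · intro h'; exact absurd (hS' h') hiI

open Classical in
lemma Dfin_eq_of_sum_eq (hpos : ∀ a ∈ α, 0 < a) (T : SRCT α)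
    (heq : ∑ i ∈ Dfin T, i = ∑ i ∈ Pfin α, i) : Dfin T = Pfin α := by
  have h1 := sum_eq_sum_card (Pfin α) (Pfin_subset (α := α))
  have h2 := sum_eq_sum_card (Dfin T) (Dfin_subset (T := T))
  have hle : ∀ k ∈ Finset.Icc 1 (α.sum - 1),
      ((Pfin α).filter (fun i => k ≤ i)).card ≤ ((Dfin T).filter (fun i => k ≤ i)).card := by
    intro k hk
    have hk1 : 1 ≤ k := (Finset.mem_Icc.1 hk).1
    rw [filter_Icc_eq (Pfin α) Pfin_subset hk1, filter_Icc_eq (Dfin T) Dfin_subset hk1]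
    exact per_k hpos T hk1
  have hsum : ∑ k ∈ Finset.Icc 1 (α.sum - 1), ((Pfin α).filter (fun i => k ≤ i)).card =
      ∑ k ∈ Finset.Icc 1 (α.sum - 1), ((Dfin T).filter (fun i => k ≤ i)).card := by
    omega
  have hall := (Finset.sum_eq_sum_iff_of_le hle).1 hsum
  apply (finset_eq_of_card_Icc (Dfin T) (Pfin α) Dfin_subset Pfin_subset ?_)
  intro k hk
  have hk1 : 1 ≤ k := (Finset.mem_Icc.1 hk).1
  have := hall k hk
  rw [filter_Icc_eq (Pfin α) Pfin_subset hk1, filter_Icc_eq (Dfin T) Dfin_subset hk1] at this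
  omega

lemma des_cases (hpos : ∀ a ∈ α, 0 < a) (T : SRCT α) :
    desSet α T = compSet α ∨ (∑ i ∈ Pfin α, i) < (∑ i ∈ Dfin T, i) := by
  rcases Nat.eq_or_lt_of_le (sum_Pfin_le_sum_Dfin hpos T) with h | h
  · left
    rw [desSet_eq_coe, compSet_eq_coe hpos, Dfin_eq_of_sum_eq hpos T h.symm]
  · right; exact h

end CB
namespace CB
open Finset

variable {α : List ℕ}

lemma canon_pos (hpos : ∀ a ∈ α, 0 < a) {u : ℕ} (h1 : 1 ≤ u) (h2 : u ≤ α.sum) :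
    rowOf (canonT α hpos) u = crow α u ∧ colOf (canonT α hpos) u = ccol α u := by
  have h := pos_uniq (canonT α hpos) (isCell_crow h1 h2)
    (show (canonT α hpos).entry (crow α u) (ccol α u) = u from centry_crow h1 h2)
  exact ⟨h.1.symm, h.2.symm⟩

lemma desSet_canon (hpos : ∀ a ∈ α, 0 < a) : desSet α (canonT α hpos) = compSet α := by
  ext i
  simp only [desSet, Set.mem_setOf_eq]
  constructor
  · intro hdes
    obtain ⟨hi1, hi2⟩ := descent_bounds hdes
    rw [descent_iff _ hi1 hi2] at hdes
    rw [(canon_pos hpos hi1 (by omega)).2, (canon_pos hpos (by omega) hi2).2] at hdes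
    obtain ⟨hc1, hc2, hc3⟩ := crow_spec hi1 (by omega : i ≤ α.sum)
    by_cases hb : i = psum α (crow α i + 1)
    · -- boundary
      have hlen : crow α i + 1 < α.length := by
        by_contra hcon
        push_neg at hcon
        have heq : crow α i + 1 = α.length := by omega
        rw [heq, psum_length] at hb
        omega
      exact ⟨crow α i + 1, by omega, hlen, hb⟩
    · -- not boundary : i+1 in same block, contradiction
      exfalso
      have hilt : i < psum α (crow α i + 1) := by omega
      have hcrow : crow α (i+1) = crow α i := crow_eq hc1 (by omega) (by omega)
      rw [ccol, ccol, hcrow] at hdes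
      omega
  · rintro ⟨j, hj1, hj2, rfl⟩
    have hb := compSet_bounds hpos ⟨j, hj1, hj2, rfl⟩
    have e : (α.take j).sum = psum α j := rfl
    rw [e] at hb ⊢
    have hcrow : crow α (psum α j) = j - 1 := by
      apply crow_eq (by omega) (psum_lt_psum hpos (by omega) (by omega))
      rw [show j - 1 + 1 = j by omega]
    rw [descent_iff _ hb.1 hb.2, (canon_pos hpos hb.1 (by omega)).2,
      (canon_pos hpos (by omega) hb.2).2, ccol, hcrow]
    rw [show j - 1 + 1 = j by omega]
    omega

lemma canon_uniq (hpos : ∀ a ∈ α, 0 < a) (T : SRCT α) (hdes : desSet α T = compSet α) :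
    T = canonT α hpos := by
  have main : ∀ m : ℕ, ∀ u, α.sum - m < u → u ≤ α.sum →
      T.entry (crow α u) (ccol α u) = u := by
    intro m
    induction m with
    | zero => intro u h1 h2; omega
    | succ m ih =>
      intro u hu1 hu2
      by_cases hcase : α.sum - m < u
      · exact ih u hcase hu2
      push_neg at hcase
      have hu1' : 1 ≤ u := by omega
      have IH : ∀ w, u < w → w ≤ α.sum → T.entry (crow α w) (ccol α w) = w := by
        intro w hw1 hw2; exact ih w (by omega) hw2
      have H1 : ∀ r c, IsCell α r c → u < T.entry r c →
          r = crow α (T.entry r c) ∧ c = ccol α (T.entry r c) := by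
        intro r c hc hgt
        have hw1 : 1 ≤ T.entry r c := T.one_le r c hc
        have hw2 : T.entry r c ≤ α.sum := T.le_sum r c hc
        have hw := IH (T.entry r c) hgt hw2
        exact T.inj r c _ _ hc (isCell_crow hw1 hw2) hw.symm
      obtain ⟨hcellu, hentu⟩ := pos_spec T hu1' hu2
      set R := rowOf T u with hR
      set C := colOf T u with hC
      have hRlen : R < α.length := hcellu.1
      suffices hgoal : crow α u = R ∧ ccol α u = C by
        rw [hgoal.1, hgoal.2]; exact hentu
      by_cases hC0 : C = 0
      · -- column 0 case
        -- step 1 : psum (R+1) ≤ u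
        have h1 : psum α (R+1) ≤ u := by
          by_contra hlt
          push_neg at hlt
          have hcw : crow α (psum α (R+1)) = R :=
            crow_eq hRlen (psum_lt_psum hpos (by omega) (by omega)) le_rfl
          have hccw : ccol α (psum α (R+1)) = 0 := by rw [ccol, hcw]; omega
          have := IH (psum α (R+1)) hlt (psum_le_sum α (R+1))
          rw [hcw, hccw] at this
          rw [hC0] at hentu
          omega
        -- step 2 : u ≤ psum (R+1)
        have h2 : u ≤ psum α (R+1) := by
          by_contra hgt
          push_neg at hgt
          obtain ⟨hs1, hs2, hs3⟩ := crow_spec hu1' hu2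
          have hstar : R + 1 ≤ crow α u := by
            by_contra hcon
            push_neg at hcon
            have := psum_mono α (show crow α u + 1 ≤ R + 1 by omega)
            omega
          have hcell1 : IsCell α (R+1) 0 := ⟨by omega, getD_pos hpos (by omega)⟩
          have hwgt : u < T.entry (R+1) 0 := by
            have := T.col1_inc R (R+1) (by omega) ⟨hRlen, getD_pos hpos hRlen⟩ hcell1
            rw [hC0] at hentu
            omega
          obtain ⟨hrw, hcw⟩ := H1 (R+1) 0 hcell1 hwgt
          set w := T.entry (R+1) 0 with hwdef
          have hw1 : 1 ≤ w := T.one_le _ _ hcell1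
          have hw2 : w ≤ α.sum := T.le_sum _ _ hcell1
          have hmono : crow α u ≤ crow α w := crow_mono hu1' hw2 (by omega)
          have hru : crow α u = R + 1 := by omega
          obtain ⟨hw1', hw2', hw3'⟩ := crow_spec hw1 hw2
          have hweq : w = psum α (R+1+1) := by
            rw [ccol] at hcw
            rw [← hrw] at hcw hw3'
            omega
          -- u is a descent since it sits in column 0
          have hdesu : Descent α T u := by
            rw [descent_iff T hu1' (by omega)]
            rw [← hC, hC0]
            omega
          have hucomp : u ∈ compSet α := by rw [← hdes]; exact hdesu
          obtain ⟨j, hj1, hj2, hje⟩ := hucomp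
          have hje' : u = psum α j := hje
          rcases Nat.lt_or_ge j (R+2) with hj | hj
          · have := psum_mono α (show j ≤ R + 1 by omega)
            omega
          · have := psum_mono α (show R + 1 + 1 ≤ j by omega)
            omega
        -- u = psum (R+1)
        have hue : u = psum α (R+1) := by omega
        have hcw : crow α u = R := by
          rw [hue]; exact crow_eq hRlen (psum_lt_psum hpos (by omega) (by omega)) le_rfl
        refine ⟨hcw, ?_⟩
        rw [ccol, hcw, hC0]
        omega
      · -- column ≥ 1 case
        have hcl : IsCell α R (C-1) := ⟨hRlen, by have := hcellu.2; omega⟩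
        have hrd : T.entry R C < T.entry R (C-1) := by
          have := T.row_dec R (C-1) (by rw [show C - 1 + 1 = C by omega]; exact hcellu)
          rw [show C - 1 + 1 = C by omega] at this
          exact this
        set u' := T.entry R (C-1) with hu'def
        have hugt : u < u' := by omega
        obtain ⟨hrw, hcw⟩ := H1 R (C-1) hcl hugt
        have hu'1 : 1 ≤ u' := T.one_le _ _ hcl
        have hu'2 : u' ≤ α.sum := T.le_sum _ _ hcl
        obtain ⟨hb1, hb2, hb3⟩ := crow_spec hu'1 hu'2
        rw [← hrw] at hb1 hb2 hb3
        have hccol : C - 1 = psum α (R+1) - u' := by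
          rw [hcw, ccol, ← hrw]
        -- u' ≥ psum R + 2
        have habs : psum α R + 2 ≤ u' := by
          by_contra hcon
          push_neg at hcon
          have hu'e : u' = psum α R + 1 := by omega
          have hgd : α.getD R 0 = psum α (R+1) - psum α R := getD_eq_psum
          have := hcellu.2
          omega
        -- u = u' - 1
        have hueq : u = u' - 1 := by
          by_contra hne
          have hlt : u < u' - 1 := by omega
          set w := u' - 1 with hwdef
          have hw1 : psum α R < w := by omega
          have hw2 : w ≤ psum α (R+1) := by omega
          have hcroww : crow α w = R := crow_eq hRlen hw1 hw2
          have := IH w (by omega) (by omega)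
          rw [hcroww] at this
          have hccw : ccol α w = C := by
            rw [ccol, hcroww]
            omega
          rw [hccw] at this
          -- T.entry R C = w but also = u
          omega
        have hcu : crow α u = R := crow_eq hRlen (by omega) (by omega)
        refine ⟨hcu, ?_⟩
        rw [ccol, hcu]
        omega
  -- conclude
  apply SRCT.ext'
  funext r c
  by_cases hc : IsCell α r c
  · have h1 := centry_pos hc
    have h2 := centry_le_sum hc
    have h3 := main α.sum (centry α r c) (by omega) h2
    obtain ⟨e1, e2⟩ := crow_centry hc
    rw [e1, e2] at h3
    exact h3
  · rw [T.zero_off _ _ hc]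
    exact ((canonT α hpos).zero_off _ _ hc).symm

end CB
namespace CB
open Finset

noncomputable def dof (γ : List ℕ) : ℕ →₀ ℕ :=
  Finsupp.onFinset (Finset.range γ.length) (fun j => γ.getD j 0)
    (fun j h => by
      rw [Finset.mem_range]
      by_contra hcon
      exact h (List.getD_eq_default _ _ (by omega)))

lemma dof_apply (γ : List ℕ) (j : ℕ) : dof γ j = γ.getD j 0 := rfl

lemma ncard_val_Ico {n a b : ℕ} (hb : b ≤ n) :
    Set.ncard {k : Fin n | a ≤ k.val ∧ k.val < b} = b - a := by
  classical
  have he : {k : Fin n | a ≤ k.val ∧ k.val < b} =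
      (((Finset.Ico a b).attachFin (fun m hm => by
        rw [Finset.mem_Ico] at hm; omega) : Finset (Fin n)) : Set (Fin n)) := by
    ext k
    simp [Finset.mem_attachFin, Finset.mem_Ico]
  rw [he, Set.ncard_coe_finset, Finset.card_attachFin, Nat.card_Ico]

section FMain

variable {n : ℕ} {γ : List ℕ} (hpos : ∀ a ∈ γ, 0 < a) (hsum : γ.sum = n)

noncomputable def fzero (γ : List ℕ) (n : ℕ) : Fin n → ℕ := fun k => crow γ (k.val + 1)

include hpos hsum

lemma fzero_lt_iff (j : ℕ) (k : Fin n) : fzero γ n k < j ↔ k.val < psum γ j := by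
  simp only [fzero]
  obtain ⟨h1, h2, h3⟩ := crow_spec (show 1 ≤ k.val + 1 by omega)
    (show k.val + 1 ≤ γ.sum by rw [hsum]; omega)
  constructor
  · intro h
    have := psum_mono γ (show crow γ (k.val+1) + 1 ≤ j by omega)
    omega
  · intro h
    by_contra hcon
    push_neg at hcon
    have := psum_mono γ (show j ≤ crow γ (k.val+1) by omega)
    omega

lemma fzero_mono (k l : Fin n) (h : k ≤ l) : fzero γ n k ≤ fzero γ n l :=
  crow_mono (by omega) (by rw [hsum]; omega) (by have : k.val ≤ l.val := h; omega)

lemma fzero_mult (j : ℕ) : dof γ j = Set.ncard {k : Fin n | fzero γ n k = j} := by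
  by_cases hj : j < γ.length
  · have he : {k : Fin n | fzero γ n k = j} =
        {k : Fin n | psum γ j ≤ k.val ∧ k.val < psum γ (j+1)} := by
      ext k
      simp only [Set.mem_setOf_eq, fzero]
      constructor
      · intro h
        obtain ⟨h1, h2, h3⟩ := crow_spec (show 1 ≤ k.val + 1 by omega)
          (show k.val + 1 ≤ γ.sum by rw [hsum]; omega)
        rw [h] at h2 h3
        omega
      · intro ⟨h1, h2⟩
        exact crow_eq hj (by omega) (by omega)
    rw [he, ncard_val_Ico (by rw [← hsum]; exact psum_le_sum γ (j+1)), dof_apply,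
      getD_eq_psum]
  · have he : {k : Fin n | fzero γ n k = j} = ∅ := by
      ext k
      simp only [Set.mem_setOf_eq, Set.mem_empty_iff_false, iff_false]
      intro h
      simp only [fzero] at h
      obtain ⟨h1, _, _⟩ := crow_spec (show 1 ≤ k.val + 1 by omega)
        (show k.val + 1 ≤ γ.sum by rw [hsum]; omega)
      omega
    rw [he, Set.ncard_empty, dof_apply, List.getD_eq_default _ _ (by omega)]

omit hpos hsum in
lemma ncard_eq_filter_card (p : Fin n → Prop) [DecidablePred p] :
    Set.ncard {k | p k} = (Finset.univ.filter p).card := by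
  rw [show {k | p k} = ((Finset.univ.filter p : Finset (Fin n)) : Set (Fin n)) by
    ext k; simp, Set.ncard_coe_finset]

omit hpos hsum in
lemma downclosed_iff (s : Finset (Fin n)) (hdc : ∀ k k' : Fin n, k' ≤ k → k ∈ s → k' ∈ s)
    (k : Fin n) : k ∈ s ↔ k.val < s.card := by
  constructor
  · intro h
    have hsub : Finset.Iic k ⊆ s := fun x hx => hdc k x (Finset.mem_Iic.1 hx) h
    have := Finset.card_le_card hsub
    have hIic : (Finset.Iic k).card = k.val + 1 := by simp
    omega
  · intro h
    by_contra hk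
    have hsub : s ⊆ Finset.Iio k := by
      intro x hx
      rw [Finset.mem_Iio]
      by_contra hxk
      push_neg at hxk
      exact hk (hdc x k hxk hx)
    have := Finset.card_le_card hsub
    have hIio : (Finset.Iio k).card = k.val := by simp
    omega

lemma mono_mult_lt_iff (f : Fin n → ℕ) (hmono : ∀ k l : Fin n, k ≤ l → f k ≤ f l)
    (hmult : ∀ j : ℕ, dof γ j = Set.ncard {k : Fin n | f k = j}) (j : ℕ) (k : Fin n) :
    f k < j ↔ k.val < psum γ j := by
  classical
  set A : Finset (Fin n) := Finset.univ.filter (fun k => f k < j) with hA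
  have hcardA : A.card = psum γ j := by
    have hbU : A = (Finset.range j).biUnion
        (fun i => Finset.univ.filter (fun k => f k = i)) := by
      ext k
      simp only [hA, Finset.mem_filter, Finset.mem_univ, true_and, Finset.mem_biUnion,
        Finset.mem_range]
      constructor
      · intro h; exact ⟨f k, h, rfl⟩
      · rintro ⟨i, hi, rfl⟩; exact hi
    rw [hbU, Finset.card_biUnion (fun x _ y _ hxy => Finset.disjoint_left.2
      (fun k h1 h2 => hxy (((Finset.mem_filter.1 h1).2).symm.trans
        (Finset.mem_filter.1 h2).2)))]
    rw [psum_eq_sum_range]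
    apply Finset.sum_congr rfl
    intro i _
    rw [← dof_apply γ i, hmult i, ncard_eq_filter_card]
  have hdc : ∀ k k' : Fin n, k' ≤ k → k ∈ A → k' ∈ A := by
    intro a b hba ha
    simp only [hA, Finset.mem_filter, Finset.mem_univ, true_and] at ha ⊢
    exact lt_of_le_of_lt (hmono b a hba) ha
  have := downclosed_iff A hdc k
  rw [hcardA] at this
  rw [← this]
  simp [hA]

lemma mono_mult_eq (f : Fin n → ℕ) (hmono : ∀ k l : Fin n, k ≤ l → f k ≤ f l)
    (hmult : ∀ j : ℕ, dof γ j = Set.ncard {k : Fin n | f k = j}) : f = fzero γ n := by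
  funext k
  have hf := mono_mult_lt_iff hpos hsum f hmono hmult
  have hf0 := fzero_lt_iff hpos hsum
  have h1 : f k < fzero γ n k + 1 := (hf _ k).2 ((hf0 (fzero γ n k + 1) k).1 (by omega))
  have h2 : fzero γ n k < f k + 1 := (hf0 _ k).2 ((hf (f k + 1) k).1 (by omega))
  omega

open Classical in
lemma coeff_F (S : Set ℕ) (hS : ∀ s ∈ S, 1 ≤ s ∧ s + 1 ≤ n) :
    FqsymSet n S (dof γ) = if S ⊆ compSet γ then 1 else 0 := by
  classical
  rw [FqsymSet]
  by_cases hsub : S ⊆ compSet γ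
  · rw [if_pos hsub]
    have hset : {f : Fin n → ℕ |
        (∀ k l : Fin n, k ≤ l → f k ≤ f l) ∧
        (∀ k l : Fin n, (l : ℕ) = (k : ℕ) + 1 → ((k : ℕ) + 1) ∈ S → f k < f l) ∧
        (∀ j : ℕ, (dof γ) j = Set.ncard {k : Fin n | f k = j})} = {fzero γ n} := by
      apply Set.eq_singleton_iff_unique_mem.2
      constructor
      · refine ⟨fzero_mono hpos hsum, ?_, fzero_mult hpos hsum⟩
        intro k l hl hmem
        have hcs := hsub hmem
        obtain ⟨m, hm1, hm2, hme⟩ := hcs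
        have hme' : (k : ℕ) + 1 = psum γ m := hme
        have hc1 : crow γ ((k:ℕ)+1) = m - 1 := by
          apply crow_eq (by omega) (by
            have := psum_lt_psum hpos (show m - 1 < m by omega) (by omega)
            omega)
          rw [show m - 1 + 1 = m by omega]
          omega
        have hc2 : m ≤ crow γ ((l:ℕ)+1) := by
          by_contra hcon
          push_neg at hcon
          obtain ⟨d1, d2, d3⟩ := crow_spec (show 1 ≤ (l:ℕ)+1 by omega)
            (show (l:ℕ)+1 ≤ γ.sum by rw [hsum]; omega)
          have := psum_mono γ (show crow γ ((l:ℕ)+1) + 1 ≤ m by omega)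
          omega
        show crow γ ((k:ℕ)+1) < crow γ ((l:ℕ)+1)
        omega
      · intro f hf
        exact mono_mult_eq hpos hsum f hf.1 hf.2.2
    rw [hset, Set.ncard_singleton]
    norm_num
  · rw [if_neg hsub]
    obtain ⟨s, hsS, hsc⟩ := Set.not_subset.1 hsub
    obtain ⟨hs1, hs2⟩ := hS s hsS
    have hset : {f : Fin n → ℕ |
        (∀ k l : Fin n, k ≤ l → f k ≤ f l) ∧
        (∀ k l : Fin n, (l : ℕ) = (k : ℕ) + 1 → ((k : ℕ) + 1) ∈ S → f k < f l) ∧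
        (∀ j : ℕ, (dof γ) j = Set.ncard {k : Fin n | f k = j})} = ∅ := by
      ext f
      simp only [Set.mem_setOf_eq, Set.mem_empty_iff_false, iff_false]
      rintro ⟨h1, h2, h3⟩
      have hfe := mono_mult_eq hpos hsum f h1 h3
      set k : Fin n := ⟨s - 1, by omega⟩ with hk
      set l : Fin n := ⟨s, by omega⟩ with hl
      have hstrict := h2 k l (by simp [hk, hl]; omega) (by simp [hk]; rw [show s - 1 + 1 = s by omega]; exact hsS)
      rw [hfe] at hstrict
      -- but crow is constant there
      obtain ⟨d1, d2, d3⟩ := crow_spec (show 1 ≤ s by omega) (show s ≤ γ.sum by omega)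
      have hslt : s < psum γ (crow γ s + 1) := by
        rcases Nat.lt_or_ge s (psum γ (crow γ s + 1)) with h | h
        · exact h
        · exfalso
          have hseq : s = psum γ (crow γ s + 1) := by omega
          have hlen : crow γ s + 1 < γ.length := by
            by_contra hcon
            push_neg at hcon
            have heq : crow γ s + 1 = γ.length := by omega
            rw [heq, psum_length] at hseq
            omega
          exact hsc ⟨crow γ s + 1, by omega, hlen, hseq⟩
      have hc2 : crow γ (s+1) = crow γ s := crow_eq d1 (by omega) (by omega)
      have e1 : fzero γ n k = crow γ s := by
        simp only [fzero, hk]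
        rw [show s - 1 + 1 = s by omega]
      have e2 : fzero γ n l = crow γ (s+1) := rfl
      rw [e1, e2, hc2] at hstrict
      omega
    rw [hset, Set.ncard_empty]
    norm_num

end FMain

end CB
namespace CB
open Finset

/-! ### compositions from subsets -/

lemma compSet_nil_length_one {β : List ℕ} (h : β.length ≤ 1) : compSet β = ∅ := by
  ext s
  simp only [compSet, Set.mem_setOf_eq, Set.mem_empty_iff_false, iff_false]
  rintro ⟨k, hk1, hk2, _⟩
  omega

lemma compSet_append_singleton {l : List ℕ} (hl : l ≠ []) (a : ℕ) :
    compSet (l ++ [a]) = compSet l ∪ {l.sum} := by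
  have hlen : 1 ≤ l.length := by
    cases l
    · exact absurd rfl hl
    · simp
  ext s
  simp only [compSet, Set.mem_setOf_eq, Set.mem_union, Set.mem_singleton_iff]
  constructor
  · rintro ⟨k, hk1, hk2, he⟩
    rw [List.length_append, List.length_singleton] at hk2
    have hkl : k ≤ l.length := by omega
    rw [List.take_append_of_le_length hkl] at he
    rcases Nat.eq_or_lt_of_le hkl with heq | hlt
    · right
      rw [he, heq, List.take_length]
    · left
      exact ⟨k, hk1, hlt, he⟩
  · rintro (⟨k, hk1, hk2, he⟩ | he)
    · refine ⟨k, hk1, ?_, ?_⟩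
      · rw [List.length_append, List.length_singleton]; omega
      · rw [List.take_append_of_le_length (by omega)]; exact he
    · refine ⟨l.length, by omega, ?_, ?_⟩
      · rw [List.length_append, List.length_singleton]; omega
      · rw [List.take_append_of_le_length le_rfl, List.take_length]; exact he

lemma compSet_lt_sum {l : List ℕ} (hpos : ∀ a ∈ l, 0 < a) {s : ℕ} (h : s ∈ compSet l) :
    s < l.sum := by
  obtain ⟨k, hk1, hk2, rfl⟩ := h
  exact psum_lt_sum hpos hk2

lemma sum_pos_of_ne_nil {l : List ℕ} (hpos : ∀ a ∈ l, 0 < a) (h : l ≠ []) : 0 < l.sum := by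
  cases l with
  | nil => exact absurd rfl h
  | cons a t =>
    have := hpos a (List.mem_cons_self)
    simp only [List.sum_cons]
    omega

lemma eq_nil_of_sum_zero {l : List ℕ} (hpos : ∀ a ∈ l, 0 < a) (h : l.sum = 0) : l = [] := by
  by_contra hne
  have := sum_pos_of_ne_nil hpos hne
  omega

lemma compSet_inj : ∀ (β β' : List ℕ), (∀ a ∈ β, 0 < a) → (∀ a ∈ β', 0 < a) →
    β.sum = β'.sum → compSet β = compSet β' → β = β' := by
  intro β
  induction β using List.reverseRecOn with
  | nil =>
    intro β' _ hpos' hsum _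
    simp only [List.sum_nil] at hsum
    exact (eq_nil_of_sum_zero hpos' hsum.symm).symm
  | append_singleton l a ih =>
    intro β' hpos hpos' hsum hcs
    rcases List.eq_nil_or_concat β' with rfl | ⟨l', a', rfl⟩
    · exfalso
      have h1 : 0 < (l ++ [a]).sum := sum_pos_of_ne_nil hpos (by simp)
      simp only [List.sum_nil] at hsum
      omega
    rw [List.concat_eq_append] at hsum hcs hpos' ⊢
    have hposl : ∀ x ∈ l, 0 < x := fun x hx => hpos x (List.mem_append_left _ hx)
    have hposl' : ∀ x ∈ l', 0 < x := fun x hx => hpos' x (List.mem_append_left _ hx)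
    have hposa : 0 < a := hpos a (List.mem_append_right _ (List.mem_singleton_self a))
    have hposa' : 0 < a' := hpos' a' (List.mem_append_right _ (List.mem_singleton_self a'))
    simp only [List.sum_append, List.sum_singleton] at hsum
    by_cases hl : l = []
    · by_cases hl' : l' = []
      · subst hl; subst hl'
        simp only [List.sum_nil, List.nil_append] at hsum ⊢
        rw [show a = a' by omega]
      · exfalso
        subst hl
        rw [compSet_append_singleton hl' a', List.nil_append,
          compSet_nil_length_one (β := [a]) (by simp)] at hcs
        have : l'.sum ∈ (∅ : Set ℕ) := by
          rw [hcs]; exact Set.mem_union_right _ rfl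
        exact this
    · by_cases hl' : l' = []
      · exfalso
        subst hl'
        rw [compSet_append_singleton hl a, List.nil_append,
          compSet_nil_length_one (β := [a']) (by simp)] at hcs
        have : l.sum ∈ (∅ : Set ℕ) := by
          rw [← hcs]; exact Set.mem_union_right _ rfl
        exact this
      · rw [compSet_append_singleton hl a, compSet_append_singleton hl' a'] at hcs
        have hsums : l.sum = l'.sum := by
          have h1 : l.sum ∈ compSet l' ∪ {l'.sum} := by
            rw [← hcs]; right; rfl
          have h2 : l'.sum ∈ compSet l ∪ {l.sum} := by
            rw [hcs]; right; rfl
          rcases h1 with h1 | h1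
          · rcases h2 with h2 | h2
            · have := compSet_lt_sum hposl' h1
              have := compSet_lt_sum hposl h2
              omega
            · exact (Set.mem_singleton_iff.1 h2).symm
          · exact Set.mem_singleton_iff.1 h1
        have hcsl : compSet l = compSet l' := by
          ext s
          constructor
          · intro hs
            have hlt := compSet_lt_sum hposl hs
            have : s ∈ compSet l' ∪ {l'.sum} := by
              rw [← hcs]; left; exact hs
            rcases this with h | h
            · exact h
            · rw [Set.mem_singleton_iff.1 h] at hlt ⊢
              omega
          · intro hs
            have hlt := compSet_lt_sum hposl' hs
            have : s ∈ compSet l ∪ {l.sum} := by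
              rw [hcs]; left; exact hs
            rcases this with h | h
            · exact h
            · rw [Set.mem_singleton_iff.1 h] at hlt ⊢
              omega
        have hll : l = l' := ih l' hposl hposl' hsums hcsl
        rw [hll, show a = a' by omega]

lemma exists_comp_of_finset : ∀ n : ℕ, 1 ≤ n → ∀ S : Finset ℕ, S ⊆ Finset.Icc 1 (n-1) →
    ∃ β : List ℕ, (∀ a ∈ β, 0 < a) ∧ β.sum = n ∧ compSet β = ↑S := by
  intro n
  induction n using Nat.strong_induction_on with
  | _ n ih =>
  intro hn S hS
  rcases S.eq_empty_or_nonempty with rfl | hne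
  · refine ⟨[n], ?_, by simp, ?_⟩
    · intro a ha
      rw [List.mem_singleton] at ha
      omega
    · rw [compSet_nil_length_one (by simp)]
      simp
  · set m := S.max' hne with hm
    have hmS : m ∈ S := S.max'_mem hne
    have hmb := Finset.mem_Icc.1 (hS hmS)
    obtain ⟨β', hp', hs', hc'⟩ := ih m (by omega) (by omega) (S.erase m) (by
      intro x hx
      have hxm := Finset.mem_erase.1 hx
      have hxb := Finset.mem_Icc.1 (hS hxm.2)
      have hxle : x ≤ m := S.le_max' x hxm.2
      rw [Finset.mem_Icc]
      constructor
      · exact hxb.1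
      · omega)
    have hβne : β' ≠ [] := by
      intro hcon
      rw [hcon] at hs'
      simp at hs'
      omega
    refine ⟨β' ++ [n - m], ?_, ?_, ?_⟩
    · intro x hx
      rcases List.mem_append.1 hx with h | h
      · exact hp' x h
      · rw [List.mem_singleton] at h
        omega
    · rw [List.sum_append, List.sum_singleton, hs']
      omega
    · rw [compSet_append_singleton hβne, hc', hs']
      ext x
      simp only [Set.mem_union, Finset.coe_erase, Set.mem_diff, Finset.mem_coe,
        Set.mem_singleton_iff]
      constructor
      · rintro (⟨h1, _⟩ | rfl)
        · exact h1
        · exact hmS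
      · intro hx
        by_cases hxm : x = m
        · right; exact hxm
        · left; exact ⟨hx, hxm⟩

/-! ### finiteness of compositions of n -/

instance compN_finite (n : ℕ) : Finite (CompN n) := by
  apply Finite.of_injective (f := fun β : CompN n =>
    ((⟨β.1.length, by
        have h1 : β.1.length ≤ β.1.sum := List.length_le_sum_of_one_le _ (fun a ha => β.2.1 a ha)
        have := β.2.2
        omega⟩ : Fin (n+1)),
     (fun i : Fin (n+1) => (⟨β.1.getD i 0, by
        have := getD_le_sum β.1 i
        have := β.2.2
        omega⟩ : Fin (n+1)))))
  intro β β' h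
  rw [Prod.mk.injEq] at h
  have hlen : β.1.length = β'.1.length := by
    have := congrArg Fin.val h.1
    simpa using this
  apply Subtype.ext
  apply List.ext_getElem hlen
  intro i h1 h2
  have hin : i < n + 1 := by
    have h3 : β.1.length ≤ β.1.sum := List.length_le_sum_of_one_le _ (fun a ha => β.2.1 a ha)
    have := β.2.2
    omega
  have := congrArg Fin.val (congrFun h.2 ⟨i, hin⟩)
  simp only [List.getD_eq_getElem _ _ (show (⟨i, hin⟩ : Fin (n+1)).val < β.1.length from h1),
    List.getD_eq_getElem _ _ (show (⟨i, hin⟩ : Fin (n+1)).val < β'.1.length from h2)] at this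
  exact this

/-! ### Cqsym as a finite sum -/

lemma Cqsym_eq_sum (n : ℕ) (α : List ℕ) :
    Cqsym n α = ∑ T ∈ (Set.toFinite {T : SRCT α | ColIncreasing α T}).toFinset,
      FqsymSet n (desSet α T) := by
  rw [Cqsym]
  exact finsum_mem_eq_finite_toFinset_sum _ (Set.toFinite _)

end CB
namespace CB

open Finset

noncomputable def Efin (α : List ℕ) : Finset (SRCT α) :=
  (Set.toFinite {T : SRCT α | ColIncreasing α T}).toFinset

lemma mem_Efin {α : List ℕ} {T : SRCT α} : T ∈ Efin α ↔ ColIncreasing α T := by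
  rw [Efin, Set.Finite.mem_toFinset, Set.mem_setOf_eq]

lemma Cqsym_eq_sum' (n : ℕ) (α : List ℕ) :
    Cqsym n α = ∑ T ∈ Efin α, FqsymSet n (desSet α T) := Cqsym_eq_sum n α

end CB

theorem canonical_basis' (n : ℕ) (hn : 1 ≤ n) :
    LinearIndependent ℤ (fun α : CompN n => Cqsym n α.1) ∧
    Submodule.span ℤ (Set.range fun α : CompN n => Cqsym n α.1) =
      Submodule.span ℤ (Set.range fun α : CompN n => FqsymSet n (compSet α.1)) := by
  classical
  letI : Fintype (CompN n) := Fintype.ofFinite _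
  set Fv : CompN n → MvPowerSeries ℕ ℤ := fun β => FqsymSet n (compSet β.1) with hFv
  set Cv : CompN n → MvPowerSeries ℕ ℤ := fun α => Cqsym n α.1 with hCv
  set w : CompN n → ℕ := fun β => ∑ i ∈ CB.Pfin β.1, i with hw
  have hpos : ∀ α : CompN n, ∀ a ∈ α.1, 0 < a := fun α => α.2.1
  have hsum : ∀ α : CompN n, α.1.sum = n := fun α => α.2.2
  -- each SRCT's descent set is realized by a composition
  have hbeta : ∀ (α : CompN n) (T : SRCT α.1), ∃ β : CompN n,
      desSet α.1 T = compSet β.1 ∧ (β = α ∨ w α < w β) ∧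
      CB.Dfin T = CB.Pfin β.1 := by
    intro α T
    obtain ⟨βl, hβp, hβs, hβc⟩ := CB.exists_comp_of_finset n hn (CB.Dfin T)
      (by have := CB.Dfin_subset (T := T); rwa [hsum α] at this)
    refine ⟨⟨βl, hβp, hβs⟩, ?_, ?_, ?_⟩
    · rw [CB.desSet_eq_coe, hβc]
    · rcases CB.des_cases (hpos α) T with hc | hc
      · left
        apply Subtype.ext
        apply CB.compSet_inj βl α.1 hβp (hpos α) (by rw [hβs, hsum α])
        rw [hβc, ← CB.desSet_eq_coe, hc]
      · right
        have he : CB.Pfin βl = CB.Dfin T := by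
          apply Finset.coe_injective
          rw [← CB.compSet_eq_coe hβp, hβc]
        simp only [hw]
        rw [he]
        exact hc
    · apply Finset.coe_injective
      rw [← CB.compSet_eq_coe hβp, hβc]
  have hdes_bounds : ∀ (α : CompN n) (T : SRCT α.1), ∀ s ∈ desSet α.1 T,
      1 ≤ s ∧ s + 1 ≤ n := by
    intro α T s hs
    have := CB.descent_bounds hs
    rw [hsum α] at this
    exact this
  have hphi : ∀ (α γ : CompN n), MvPowerSeries.coeff (CB.dof γ.1) (Cv α) =
      ∑ T ∈ CB.Efin α.1, (if desSet α.1 T ⊆ compSet γ.1 then (1:ℤ) else 0) := by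
    intro α γ
    simp only [hCv]
    rw [CB.Cqsym_eq_sum' n α.1, map_sum]
    apply Finset.sum_congr rfl
    intro T _
    exact CB.coeff_F (hpos γ) (hsum γ) (desSet α.1 T) (hdes_bounds α T)
  -- diagonal entries are 1
  have hdiag : ∀ α : CompN n, MvPowerSeries.coeff (CB.dof α.1) (Cv α) = 1 := by
    intro α
    rw [hphi α α]
    have hfil : (CB.Efin α.1).filter (fun T => desSet α.1 T ⊆ compSet α.1) =
        {CB.canonT α.1 (hpos α)} := by
      ext T
      rw [Finset.mem_filter, Finset.mem_singleton]
      constructor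
      · rintro ⟨hTE, hTsub⟩
        have hDP : CB.Dfin T ⊆ CB.Pfin α.1 := by
          intro i hi
          rw [CB.mem_Pfin (hpos α)]
          exact hTsub ((CB.desSet_eq_coe T) ▸ hi)
        have hsle : ∑ i ∈ CB.Dfin T, i ≤ ∑ i ∈ CB.Pfin α.1, i :=
          Finset.sum_le_sum_of_subset hDP
        rcases CB.des_cases (hpos α) T with hc | hc
        · exact CB.canon_uniq (hpos α) T hc
        · omega
      · rintro rfl
        exact ⟨CB.mem_Efin.2 (CB.canonT_colInc α.1 (hpos α)),
          le_of_eq (CB.desSet_canon (hpos α))⟩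
    rw [Finset.sum_boole, hfil, Finset.card_singleton]
    norm_num
  -- off-diagonal entries vanish unless w increases
  have hoff : ∀ α γ : CompN n, α ≠ γ →
      MvPowerSeries.coeff (CB.dof γ.1) (Cv α) ≠ 0 → w α < w γ := by
    intro α γ hne hnz
    rw [hphi α γ] at hnz
    have hex : ∃ T ∈ CB.Efin α.1, desSet α.1 T ⊆ compSet γ.1 := by
      by_contra hcon
      push_neg at hcon
      apply hnz
      apply Finset.sum_eq_zero
      intro T hT
      rw [if_neg (hcon T hT)]
    obtain ⟨T, hTE, hTsub⟩ := hex
    have hDP : CB.Dfin T ⊆ CB.Pfin γ.1 := by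
      intro i hi
      rw [CB.mem_Pfin (hpos γ)]
      exact hTsub ((CB.desSet_eq_coe T) ▸ hi)
    have hsle : ∑ i ∈ CB.Dfin T, i ≤ ∑ i ∈ CB.Pfin γ.1, i :=
      Finset.sum_le_sum_of_subset hDP
    rcases CB.des_cases (hpos α) T with hc | hc
    · -- desSet T = compSet α, so Dfin T = Pfin α
      have hDA : CB.Dfin T = CB.Pfin α.1 := by
        apply Finset.coe_injective
        rw [← CB.desSet_eq_coe, ← CB.compSet_eq_coe (hpos α), hc]
      rw [hDA] at hsle hDP
      rcases Nat.eq_or_lt_of_le hsle with heq | hlt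
      · exfalso
        -- equal sums with subset forces equality of Finsets, then α = γ
        have hPP : CB.Pfin α.1 = CB.Pfin γ.1 := by
          by_contra hPPne
          have hss : CB.Pfin α.1 ⊂ CB.Pfin γ.1 := ⟨hDP, fun h => hPPne
            (Finset.Subset.antisymm hDP h)⟩
          obtain ⟨x, hxt, hxs⟩ := Finset.exists_of_ssubset hss
          have hx1 : 1 ≤ x := by
            have := CB.Pfin_subset (α := γ.1) hxt
            exact (Finset.mem_Icc.1 this).1
          have := Finset.sum_lt_sum_of_subset hDP hxt hxs (by omega)
            (fun i _ _ => Nat.zero_le i)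
          omega
        apply hne
        apply Subtype.ext
        apply CB.compSet_inj α.1 γ.1 (hpos α) (hpos γ) (by rw [hsum α, hsum γ])
        rw [CB.compSet_eq_coe (hpos α), CB.compSet_eq_coe (hpos γ), hPP]
      · exact hlt
    · show w α < w γ
      simp only [hw]
      omega
  -- linear independence
  have hLI : LinearIndependent ℤ Cv := by
    rw [Fintype.linearIndependent_iff]
    intro g hg
    have hgc : ∀ γ : CompN n, ∑ α : CompN n, g α * MvPowerSeries.coeff (CB.dof γ.1) (Cv α) = 0 := by
      intro γ
      have := congrArg (MvPowerSeries.coeff (CB.dof γ.1)) hg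
      rw [map_sum, map_zero] at this
      rw [← this]
      apply Finset.sum_congr rfl
      intro α _
      rw [map_zsmul, smul_eq_mul]
    have hstep : ∀ γ : CompN n, (∀ α : CompN n, w α < w γ → g α = 0) → g γ = 0 := by
      intro γ hind
      have h0 := hgc γ
      rw [← Finset.add_sum_erase _ _ (Finset.mem_univ γ)] at h0
      have hrest : ∑ α ∈ Finset.univ.erase γ, g α * MvPowerSeries.coeff (CB.dof γ.1) (Cv α) = 0 := by
        apply Finset.sum_eq_zero
        intro α hα
        have hαne : α ≠ γ := (Finset.mem_erase.1 hα).1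
        by_cases hz : MvPowerSeries.coeff (CB.dof γ.1) (Cv α) = 0
        · rw [hz, mul_zero]
        · rw [hind α (hoff α γ hαne hz), zero_mul]
      rw [hrest, add_zero, hdiag γ, mul_one] at h0
      exact h0
    have hmain : ∀ m : ℕ, ∀ γ : CompN n, w γ ≤ m → g γ = 0 := by
      intro m
      induction m using Nat.strong_induction_on with
      | _ m ih =>
      intro γ hγ
      apply hstep γ
      intro α hα
      exact ih (w α) (by omega) α le_rfl
    intro γ
    exact hmain (w γ) γ le_rfl
  constructor
  · exact hLI
  · -- span equality
    apply le_antisymm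
    · rw [Submodule.span_le]
      rintro x ⟨α, rfl⟩
      show Cv α ∈ Submodule.span ℤ (Set.range Fv)
      rw [hCv]
      simp only
      rw [CB.Cqsym_eq_sum' n α.1]
      apply Submodule.sum_mem
      intro T _
      obtain ⟨β, hβ1, _, _⟩ := hbeta α T
      rw [hβ1]
      exact Submodule.subset_span ⟨β, rfl⟩
    · rw [Submodule.span_le]
      rintro x ⟨β, rfl⟩
      show Fv β ∈ Submodule.span ℤ (Set.range Cv)
      set W : ℕ := ∑ i ∈ Finset.Icc 1 (n-1), i with hW
      have hwb : ∀ β' : CompN n, w β' ≤ W := by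
        intro β'
        apply Finset.sum_le_sum_of_subset
        have := CB.Pfin_subset (α := β'.1)
        rwa [hsum β'] at this
      have hclaim : ∀ m : ℕ, ∀ β' : CompN n, W < w β' + m →
          Fv β' ∈ Submodule.span ℤ (Set.range Cv) := by
        intro m
        induction m with
        | zero =>
          intro β' hβ'
          exfalso
          have := hwb β'
          omega
        | succ m ih =>
          intro β' hβ'
          have hcanon_mem : CB.canonT β'.1 (hpos β') ∈ CB.Efin β'.1 :=
            CB.mem_Efin.2 (CB.canonT_colInc β'.1 (hpos β'))
          have hsplit : Cv β' = FqsymSet n (desSet β'.1 (CB.canonT β'.1 (hpos β'))) +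
              ∑ T ∈ (CB.Efin β'.1).erase (CB.canonT β'.1 (hpos β')),
                FqsymSet n (desSet β'.1 T) := by
            rw [hCv]
            simp only
            rw [CB.Cqsym_eq_sum' n β'.1, ← Finset.add_sum_erase _ _ hcanon_mem]
          have hcanon_des : FqsymSet n (desSet β'.1 (CB.canonT β'.1 (hpos β'))) = Fv β' := by
            rw [CB.desSet_canon (hpos β')]
          have hFeq : Fv β' = Cv β' - ∑ T ∈ (CB.Efin β'.1).erase (CB.canonT β'.1 (hpos β')),
              FqsymSet n (desSet β'.1 T) := by
            rw [hsplit, hcanon_des]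
            ring
          rw [hFeq]
          apply Submodule.sub_mem
          · exact Submodule.subset_span ⟨β', rfl⟩
          · apply Submodule.sum_mem
            intro T hT
            obtain ⟨βT, hβT1, hβT2, _⟩ := hbeta β' T
            rw [hβT1]
            rcases hβT2 with rfl | hlt
            · exfalso
              have hTne : T ≠ CB.canonT βT.1 (hpos βT) := (Finset.mem_erase.1 hT).1
              apply hTne
              apply CB.canon_uniq (hpos βT) T
              rw [hβT1]
            · exact ih βT (by omega)
      exact hclaim (W + 1) β (by omega)
/-- The canonical quasisymmetric functions `{C_α : α ⊨ n}` form a `ℤ`-basis of `QSymⁿ`, the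
`ℤ`-span of the fundamental quasisymmetric functions `{F_α : α ⊨ n}`. -/
theorem canonical_basis (n : ℕ) (hn : 1 ≤ n) :
    LinearIndependent ℤ (fun α : CompN n => Cqsym n α.1) ∧
    Submodule.span ℤ (Set.range fun α : CompN n => Cqsym n α.1) =
      Submodule.span ℤ (Set.range fun α : CompN n => FqsymSet n (compSet α.1)) := by
  exact canonical_basis' n hn
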